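/- There exists an integral domain satisfying the PC condition which is neither a pre-Schreier domain (hence not a Bézout domain) nor satisfies the MIP condition. -/

import Mathlib

open HahnSeries

set_option maxHeartbeats 1000000
set_option synthInstance.maxHeartbeats 200000

noncomputable section PCExample

abbrev KK : Type := HahnSeries ℚ ℂ

/-- membership predicate: support nonneg, and coefficients at exponents ≤ 1 are real. -/
def goodFun (f : KK) : Prop := ∀ q : ℚ, (q < 0 → f.coeff q = 0) ∧ (q ≤ 1 → (f.coeff q).im = 0)

lemma goodFun.coeff_nonneg {f : KK} (hf : goodFun f) {q : ℚ} (h : f.coeff q ≠ 0) : 0 ≤ q := by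
  by_contra hq
  exact h ((hf q).1 (lt_of_not_ge hq))

lemma goodFun.im_eq {f : KK} (hf : goodFun f) {q : ℚ} (h : q ≤ 1) : (f.coeff q).im = 0 :=
  (hf q).2 h

lemma goodFun.order_nonneg {f : KK} (hf : goodFun f) (h0 : f ≠ 0) : 0 ≤ f.order :=
  hf.coeff_nonneg (coeff_order_eq_zero.not.mpr h0)

def RR : Subring KK where
  carrier := {f | goodFun f}
  zero_mem' := by intro q; simp
  one_mem' := by
    intro q
    rw [show (1 : KK) = single 0 1 from (single_zero_one).symm, coeff_single]
    constructor
    · intro hq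
      simp [hq.ne]
    · intro _
      split <;> simp
  add_mem' := by
    intro f g hf hg q
    constructor
    · intro hq
      simp [HahnSeries.coeff_add, (hf q).1 hq, (hg q).1 hq]
    · intro hq
      simp [HahnSeries.coeff_add, Complex.add_im, (hf q).2 hq, (hg q).2 hq]
  neg_mem' := by
    intro f hf q
    constructor
    · intro hq
      simp [HahnSeries.coeff_neg, (hf q).1 hq]
    · intro hq
      simp [HahnSeries.coeff_neg, Complex.neg_im, (hf q).2 hq]
  mul_mem' := by
    intro f g hf hg q
    constructor
    · intro hq
      rw [coeff_mul]
      apply Finset.sum_eq_zero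
      intro ij hij
      rw [Finset.mem_addAntidiagonal] at hij
      obtain ⟨h1, h2, h3⟩ := hij
      have i1 : 0 ≤ ij.1 := hf.coeff_nonneg h1
      have i2 : 0 ≤ ij.2 := hg.coeff_nonneg h2
      exact absurd (h3 ▸ add_nonneg i1 i2) (not_le.mpr hq)
    · intro hq
      rw [coeff_mul, Complex.im_sum]
      apply Finset.sum_eq_zero
      intro ij hij
      rw [Finset.mem_addAntidiagonal] at hij
      obtain ⟨h1, h2, h3⟩ := hij
      have i1 : 0 ≤ ij.1 := hf.coeff_nonneg h1
      have i2 : 0 ≤ ij.2 := hg.coeff_nonneg h2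
      have j1 : ij.1 ≤ 1 := by linarith [h3.le]
      have j2 : ij.2 ≤ 1 := by linarith [h3.le]
      rw [Complex.mul_im, hf.im_eq j1, hg.im_eq j2]
      ring


lemma inv_good {f : KK} (hf : goodFun f) (h0 : f ≠ 0) (ho : f.order = 0) : goodFun f⁻¹ := by
  set g : KK := f⁻¹ with hgdef
  have hg0 : g ≠ 0 := inv_ne_zero h0
  have hfg : f * g = 1 := mul_inv_cancel₀ h0
  have hog : g.order = 0 := by
    have h := order_mul h0 hg0
    rw [hfg, order_one, ho, zero_add] at h
    exact h.symm
  have hsupp : ∀ q : ℚ, g.coeff q ≠ 0 → 0 ≤ q := by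
    intro q hq
    have := order_le_of_coeff_ne_zero hq
    rwa [hog] at this
  -- the set of bad coefficients of g
  set S : Set ℚ := {q | q ≤ 1 ∧ (g.coeff q).im ≠ 0} with hSdef
  have hSsub : S ⊆ g.support := by
    intro q hq
    exact fun hc => hq.2 (by rw [hc]; simp)
  have hSWF : S.IsWF := g.isWF_support.subset hSsub
  have hSempty : ¬ S.Nonempty := by
    intro hS
    set q₀ : ℚ := hSWF.min hS with hq₀def
    have hq₀ : q₀ ≤ 1 ∧ (g.coeff q₀).im ≠ 0 := hSWF.min_mem hS
    have hf0 : f.coeff 0 ≠ 0 := by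
      have := coeff_order_eq_zero.not.mpr h0
      rwa [ho] at this
    have key : ((f * g).coeff q₀).im = (f.coeff 0 * g.coeff q₀).im := by
      rw [coeff_mul, Complex.im_sum]
      rw [show (f.coeff 0 * g.coeff q₀).im
        = (f.coeff (0, q₀).1 * g.coeff (0, q₀).2).im from rfl]
      apply Finset.sum_eq_single (0, q₀)
      · intro b hb hbne
        rw [Finset.mem_addAntidiagonal] at hb
        obtain ⟨h1, h2, h3⟩ := hb
        have hb1 : 0 ≤ b.1 := hf.coeff_nonneg h1
        have hb2 : 0 ≤ b.2 := hsupp b.2 h2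
        rcases eq_or_lt_of_le hb1 with heq | hlt
        · exfalso
          apply hbne
          have : b.2 = q₀ := by rw [← h3, ← heq, zero_add]
          exact Prod.ext heq.symm this
        · have hb2lt : b.2 < q₀ := by linarith
          have hb2le : b.2 ≤ 1 := le_trans hb2lt.le hq₀.1
          have hb2S : b.2 ∉ S := fun hmem => hSWF.not_lt_min hS hmem hb2lt
          have him2 : (g.coeff b.2).im = 0 := by
            by_contra him
            exact hb2S ⟨hb2le, him⟩
          have hb1le : b.1 ≤ 1 := by linarith [hq₀.1]
          rw [Complex.mul_im, hf.im_eq hb1le, him2]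
          ring
      · intro hnot
        exfalso
        apply hnot
        rw [Finset.mem_addAntidiagonal]
        refine ⟨hf0, ?_, zero_add q₀⟩
        intro hc
        exact hq₀.2 (by rw [hc]; simp)
    rw [hfg] at key
    have hone : ((1 : KK).coeff q₀).im = 0 := by
      rw [show (1 : KK) = single 0 1 from (single_zero_one).symm, coeff_single]
      split <;> simp
    rw [hone] at key
    rw [Complex.mul_im, hf.im_eq (by norm_num : (0:ℚ) ≤ 1)] at key
    have hre : (f.coeff 0).re ≠ 0 := by
      intro h
      exact hf0 (Complex.ext h (hf.im_eq (by norm_num : (0:ℚ) ≤ 1)))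
    apply hq₀.2
    have : (f.coeff 0).re * (g.coeff q₀).im = 0 := by linarith [key]
    rcases mul_eq_zero.mp this with h | h
    · exact absurd h hre
    · exact h
  intro q
  constructor
  · intro hq
    by_contra hc
    exact absurd (hsupp q hc) (not_le.mpr hq)
  · intro hq
    by_contra hc
    exact hSempty ⟨q, hq, hc⟩

/-- the element X^γ of the subring -/
def Xel (γ : ℚ) (hγ : 0 ≤ γ) : RR :=
  ⟨single γ 1, by
    intro q
    rw [coeff_single]
    constructor
    · intro hq
      split
      · next h => exact absurd (h ▸ hγ) (not_le.mpr hq)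
      · rfl
    · intro _
      split <;> simp⟩

lemma coe_ne_zero {f : RR} (h : f ≠ 0) : (f : KK) ≠ 0 := by
  intro hc
  exact h (Subtype.ext hc)

lemma isUnit_of_order_eq_zero {f : RR} (h0 : (f : KK) ≠ 0) (ho : (f : KK).order = 0) :
    IsUnit f := by
  refine isUnit_iff_exists_inv.mpr ⟨⟨(f : KK)⁻¹, inv_good f.2 h0 ho⟩, ?_⟩
  exact Subtype.ext (by simpa using mul_inv_cancel₀ h0)

lemma order_pos_of_not_isUnit {f : RR} (h0 : f ≠ 0) (hu : ¬ IsUnit f) :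
    0 < (f : KK).order := by
  rcases lt_or_eq_of_le ((f.2 : goodFun (f : KK)).order_nonneg (coe_ne_zero h0)) with h | h
  · exact h
  · exact absurd (isUnit_of_order_eq_zero (coe_ne_zero h0) h.symm) hu

lemma not_isUnit_Xel {γ : ℚ} (hγ : 0 < γ) : ¬ IsUnit (Xel γ hγ.le) := by
  intro hu
  rcases isUnit_iff_exists_inv.mp hu with ⟨v, hv⟩
  have hv' : (single γ 1 : KK) * (v : KK) = 1 := by
    have := congrArg (fun x : RR => (x : KK)) hv
    simpa [Xel] using this
  have hvne : (v : KK) ≠ 0 := by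
    intro hc
    rw [hc, mul_zero] at hv'
    exact zero_ne_one hv'
  have horder := order_mul (x := (single γ 1 : KK)) (y := (v : KK))
    (single_ne_zero (one_ne_zero : (1:ℂ) ≠ 0)) hvne
  rw [hv', order_one, order_single (one_ne_zero : (1:ℂ) ≠ 0)] at horder
  have hvnonneg : 0 ≤ (v : KK).order := (v.2 : goodFun (v : KK)).order_nonneg hvne
  linarith

lemma Xel_dvd {γ : ℚ} (hγ : 0 < γ) {a : RR} (ha : (a : KK) ≠ 0)
    (h1 : γ ≤ (a : KK).order)
    (h2 : ∀ q : ℚ, (((a : KK)).coeff q).im ≠ 0 → 1 + γ < q) :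
    Xel γ hγ.le ∣ a := by
  set d : KK := single (-γ) 1 * (a : KK) with hddef
  have hdcoeff : ∀ q : ℚ, d.coeff q = (a : KK).coeff (q + γ) := by
    intro q
    have h := coeff_single_mul_add (r := (1:ℂ)) (x := (a : KK)) (a := q + γ) (b := -γ)
    rw [one_mul] at h
    rw [hddef]
    conv_lhs => rw [show q = (q + γ) + (-γ) by ring]
    exact h
  have hd : goodFun d := by
    intro q
    constructor
    · intro hq
      rw [hdcoeff]
      apply coeff_eq_zero_of_lt_order
      have : q + γ < γ := by linarith
      exact lt_of_lt_of_le this h1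
    · intro hq
      rw [hdcoeff]
      by_contra hc
      have := h2 (q + γ) hc
      linarith
  refine ⟨⟨d, hd⟩, ?_⟩
  apply Subtype.ext
  show (a : KK) = (single γ 1 : KK) * d
  rw [hddef, ← mul_assoc, single_mul_single, one_mul, add_neg_cancel, single_zero_one, one_mul]

/-- set of exponents where the coefficient is not real -/
def badSet (f : KK) : Set ℚ := {q | (f.coeff q).im ≠ 0}

lemma badSet_isWF (f : KK) : (badSet f).IsWF := by
  apply f.isWF_support.subset
  intro q hq
  simp only [badSet, Set.mem_setOf_eq] at hq
  intro hc
  exact hq (by rw [hc]; rfl)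

open Classical in
def tau (f : KK) : ℚ := if h : (badSet f).Nonempty then (badSet_isWF f).min h - 1 else 1

lemma tau_pos {f : KK} (hf : goodFun f) : 0 < tau f := by
  by_cases h : (badSet f).Nonempty
  · rw [tau, dif_pos h]
    have hmem : (badSet_isWF f).min h ∈ badSet f := (badSet_isWF f).min_mem h
    have h2 : ¬ ((badSet_isWF f).min h ≤ 1) := fun hle => hmem (hf.im_eq hle)
    linarith [not_le.mp h2]
  · rw [tau, dif_neg h]
    norm_num

lemma tau_le {f : KK} {q : ℚ} (h : (f.coeff q).im ≠ 0) : 1 + tau f ≤ q := by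
  have hne : (badSet f).Nonempty := ⟨q, h⟩
  rw [tau, dif_pos hne]
  have := (badSet_isWF f).min_le hne (show q ∈ badSet f from h)
  linarith

lemma core (a b : RR) (ha : a ≠ 0) (hb : b ≠ 0) (hau : ¬ IsUnit a) (hbu : ¬ IsUnit b) :
    ∃ c : RR, ¬ IsUnit c ∧ c ∣ a ∧ c ∣ b := by
  have hoa : 0 < (a : KK).order := order_pos_of_not_isUnit ha hau
  have hob : 0 < (b : KK).order := order_pos_of_not_isUnit hb hbu
  have hta : 0 < tau (a : KK) := tau_pos a.2
  have htb : 0 < tau (b : KK) := tau_pos b.2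
  set γ : ℚ := min (min (a : KK).order (b : KK).order) (min (tau (a : KK)) (tau (b : KK))) / 2
    with hγdef
  have hγpos : 0 < γ := by
    rw [hγdef]
    have := lt_min (lt_min hoa hob) (lt_min hta htb)
    linarith
  have hγa : γ ≤ (a : KK).order := by
    have h1 : min (min (a : KK).order (b : KK).order) (min (tau (a:KK)) (tau (b:KK)))
        ≤ (a : KK).order := le_trans (min_le_left _ _) (min_le_left _ _)
    rw [hγdef]; linarith
  have hγb : γ ≤ (b : KK).order := by
    have h1 : min (min (a : KK).order (b : KK).order) (min (tau (a:KK)) (tau (b:KK)))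
        ≤ (b : KK).order := le_trans (min_le_left _ _) (min_le_right _ _)
    rw [hγdef]; linarith
  have hγta : γ < tau (a : KK) := by
    have h1 : min (min (a : KK).order (b : KK).order) (min (tau (a:KK)) (tau (b:KK)))
        ≤ tau (a : KK) := le_trans (min_le_right _ _) (min_le_left _ _)
    rw [hγdef]; linarith
  have hγtb : γ < tau (b : KK) := by
    have h1 : min (min (a : KK).order (b : KK).order) (min (tau (a:KK)) (tau (b:KK)))
        ≤ tau (b : KK) := le_trans (min_le_right _ _) (min_le_right _ _)
    rw [hγdef]; linarith
  refine ⟨Xel γ hγpos.le, not_isUnit_Xel hγpos, ?_, ?_⟩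
  · apply Xel_dvd hγpos (coe_ne_zero ha) hγa
    intro q hq
    have := tau_le hq
    linarith
  · apply Xel_dvd hγpos (coe_ne_zero hb) hγb
    intro q hq
    have := tau_le hq
    linarith

lemma pc_holds : ∀ a b : RR, Ideal.span {a, b} ≠ (⊤ : Ideal RR) →
    ∃ c : RR, Ideal.span {a, b} ≤ Ideal.span {c} ∧ Ideal.span ({c} : Set RR) ≠ ⊤ := by
  intro a b hne
  have hau : ¬ IsUnit a := fun h =>
    hne (Ideal.eq_top_of_isUnit_mem _ (Ideal.subset_span (by simp)) h)
  have hbu : ¬ IsUnit b := fun h =>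
    hne (Ideal.eq_top_of_isUnit_mem _ (Ideal.subset_span (by simp)) h)
  obtain ⟨c, hcu, hca, hcb⟩ : ∃ c : RR, ¬ IsUnit c ∧ c ∣ a ∧ c ∣ b := by
    by_cases ha : a = 0
    · by_cases hb : b = 0
      · exact ⟨Xel 1 one_pos.le, not_isUnit_Xel one_pos, ha ▸ dvd_zero _, hb ▸ dvd_zero _⟩
      · obtain ⟨c, h1, h2, _⟩ := core b b hb hb hbu hbu
        exact ⟨c, h1, ha ▸ dvd_zero _, h2⟩
    · by_cases hb : b = 0
      · obtain ⟨c, h1, h2, _⟩ := core a a ha ha hau hau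
        exact ⟨c, h1, h2, hb ▸ dvd_zero _⟩
      · obtain ⟨c, h1, h2, h3⟩ := core a b ha hb hau hbu
        exact ⟨c, h1, h2, h3⟩
  refine ⟨c, ?_, ?_⟩
  · rw [Ideal.span_le]
    intro x hx
    rcases hx with rfl | hx
    · exact Ideal.mem_span_singleton.mpr hca
    · rw [Set.mem_singleton_iff] at hx
      subst hx
      exact Ideal.mem_span_singleton.mpr hcb
  · rw [Ne, Ideal.span_singleton_eq_top]
    exact hcu

/-- general single elements of the ring -/
def sel (γ : ℚ) (z : ℂ) (h0 : 0 ≤ γ) (h1 : 1 < γ ∨ z.im = 0) : RR :=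
  ⟨single γ z, by
    intro q
    rw [coeff_single]
    constructor
    · intro hq
      split
      · next he => exact absurd (he ▸ h0) (not_le.mpr hq)
      · rfl
    · intro hq
      split
      · next he =>
        rcases h1 with h | h
        · exfalso; rw [he] at hq; linarith
        · exact h
      · rfl⟩

lemma not_all_primal : ¬ (∀ c : RR, IsPrimal c) := by
  intro hyp
  have hAEim : (1:ℚ) < 3/2 := by norm_num
  set AE : RR := sel (3/2) Complex.I (by norm_num) (Or.inl hAEim) with hAE
  set CE : RR := Xel 2 (by norm_num) with hCE
  set QE : RR := sel 1 (-1) (by norm_num) (Or.inr (by simp)) with hQE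
  have hdvd : CE ∣ AE * AE := by
    refine ⟨QE, Subtype.ext ?_⟩
    show (single ((3:ℚ)/2) Complex.I : KK) * single ((3:ℚ)/2) Complex.I
        = single (2:ℚ) 1 * single (1:ℚ) (-1)
    rw [single_mul_single, single_mul_single, Complex.I_mul_I]
    norm_num
  obtain ⟨c₁, c₂, h1, h2, heq⟩ := hyp CE hdvd
  -- basic coercions
  have hsne : (single ((3:ℚ)/2) Complex.I : KK) ≠ 0 := single_ne_zero Complex.I_ne_zero
  have hK : (single (2:ℚ) 1 : KK) = (c₁ : KK) * (c₂ : KK) := by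
    have := congrArg (fun x : RR => (x : KK)) heq
    simpa [hCE, Xel] using this
  have hc₁ne : (c₁ : KK) ≠ 0 := left_ne_zero_of_mul (hK ▸ single_ne_zero one_ne_zero)
  have hc₂ne : (c₂ : KK) ≠ 0 := right_ne_zero_of_mul (hK ▸ single_ne_zero one_ne_zero)
  have hord12 : (c₁ : KK).order + (c₂ : KK).order = 2 := by
    have h := order_mul hc₁ne hc₂ne
    rw [← hK, order_single (one_ne_zero : (1:ℂ) ≠ 0)] at h
    exact h.symm
  obtain ⟨d₁, hd₁⟩ := h1
  obtain ⟨d₂, hd₂⟩ := h2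
  have hKd₁ : (single ((3:ℚ)/2) Complex.I : KK) = (c₁ : KK) * (d₁ : KK) := by
    have := congrArg (fun x : RR => (x : KK)) hd₁
    simpa [hAE, sel] using this
  have hKd₂ : (single ((3:ℚ)/2) Complex.I : KK) = (c₂ : KK) * (d₂ : KK) := by
    have := congrArg (fun x : RR => (x : KK)) hd₂
    simpa [hAE, sel] using this
  have hd₁ne : (d₁ : KK) ≠ 0 := right_ne_zero_of_mul (hKd₁ ▸ hsne)
  have hd₂ne : (d₂ : KK) ≠ 0 := right_ne_zero_of_mul (hKd₂ ▸ hsne)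
  have hod₁ : (c₁ : KK).order + (d₁ : KK).order = 3/2 := by
    have h := order_mul hc₁ne hd₁ne
    rw [← hKd₁, order_single Complex.I_ne_zero] at h
    exact h.symm
  have hod₂ : (c₂ : KK).order + (d₂ : KK).order = 3/2 := by
    have h := order_mul hc₂ne hd₂ne
    rw [← hKd₂, order_single Complex.I_ne_zero] at h
    exact h.symm
  have hd₁nonneg : 0 ≤ (d₁ : KK).order := (d₁.2 : goodFun (d₁ : KK)).order_nonneg hd₁ne
  have hd₂nonneg : 0 ≤ (d₂ : KK).order := (d₂.2 : goodFun (d₂ : KK)).order_nonneg hd₂ne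
  -- main step : the order of each cᵢ must exceed 1
  have key : ∀ (c d : RR), (single ((3:ℚ)/2) Complex.I : KK) = (c : KK) * (d : KK) →
      (d : KK).order ≤ 1 → 1 < (c : KK).order := by
    intro c d hcd hdle
    have hcne : (c : KK) ≠ 0 := left_ne_zero_of_mul (hcd ▸ hsne)
    have hdne : (d : KK) ≠ 0 := right_ne_zero_of_mul (hcd ▸ hsne)
    have hord : (c : KK).order + (d : KK).order = 3/2 := by
      have h := order_mul hcne hdne
      rw [← hcd, order_single Complex.I_ne_zero] at h
      exact h.symm
    have hcoeff := coeff_mul_order_add_order (c : KK) (d : KK)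
    rw [← hcd, hord, coeff_single_same] at hcoeff
    have hwim : ((d : KK).leadingCoeff).im = 0 := by
      rw [leadingCoeff_eq]
      exact (d.2 : goodFun (d : KK)).im_eq hdle
    by_contra hle
    push_neg at hle
    have hzim : ((c : KK).leadingCoeff).im = 0 := by
      rw [leadingCoeff_eq]
      exact (c.2 : goodFun (c : KK)).im_eq hle
    have him := congrArg Complex.im hcoeff
    rw [Complex.I_im, Complex.mul_im, hwim, hzim] at him
    simp at him
  have hoc₂le : (c₂ : KK).order ≤ 3/2 := by linarith
  have hoc₁le : (c₁ : KK).order ≤ 3/2 := by linarith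
  have h₁ : 1 < (c₁ : KK).order := key c₁ d₁ hKd₁ (by linarith)
  have h₂ : 1 < (c₂ : KK).order := key c₂ d₂ hKd₂ (by linarith)
  linarith

lemma coeff_zero_mul {f g : KK} (hf : goodFun f) (hg : goodFun g) :
    (f * g).coeff 0 = f.coeff 0 * g.coeff 0 := by
  rw [coeff_mul]
  rw [show f.coeff 0 * g.coeff 0 = f.coeff ((0:ℚ),(0:ℚ)).1 * g.coeff ((0:ℚ),(0:ℚ)).2 from rfl]
  apply Finset.sum_eq_single ((0:ℚ),(0:ℚ))
  · intro b hb hbne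
    rw [Finset.mem_addAntidiagonal] at hb
    obtain ⟨h1, h2, h3⟩ := hb
    have hb1 := hf.coeff_nonneg h1
    have hb2 := hg.coeff_nonneg h2
    exfalso
    apply hbne
    have e1 : b.1 = 0 := by linarith
    have e2 : b.2 = 0 := by linarith
    exact Prod.ext e1 e2
  · intro hnot
    rw [Finset.mem_addAntidiagonal] at hnot
    by_cases h : f.coeff 0 = 0
    · rw [show f.coeff ((0:ℚ),(0:ℚ)).1 = f.coeff 0 from rfl, h, zero_mul]
    · by_cases h' : g.coeff 0 = 0
      · rw [show g.coeff ((0:ℚ),(0:ℚ)).2 = g.coeff 0 from rfl, h', mul_zero]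
      · exact absurd ⟨h, h', add_zero 0⟩ hnot

def MM : Ideal RR where
  carrier := {f : RR | ((f : KK)).coeff 0 = 0}
  zero_mem' := by
    show ((0 : RR) : KK).coeff 0 = 0
    rw [ZeroMemClass.coe_zero, HahnSeries.coeff_zero]
  add_mem' := by
    intro x y hx hy
    show ((x + y : RR) : KK).coeff 0 = 0
    rw [AddMemClass.coe_add, HahnSeries.coeff_add]
    rw [show ((x : KK)).coeff 0 = 0 from hx, show ((y : KK)).coeff 0 = 0 from hy, add_zero]
  smul_mem' := by
    intro r f hf
    show ((r • f : RR) : KK).coeff 0 = 0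
    rw [smul_eq_mul, MulMemClass.coe_mul, coeff_zero_mul r.2 f.2,
      show ((f : KK)).coeff 0 = 0 from hf, mul_zero]

lemma mem_MM {f : RR} : f ∈ MM ↔ ((f : KK)).coeff 0 = 0 := Iff.rfl

lemma MM_isMaximal : MM.IsMaximal := by
  rw [Ideal.isMaximal_iff]
  constructor
  · rw [mem_MM, OneMemClass.coe_one, show (1 : KK) = single 0 1 from (single_zero_one).symm,
      coeff_single_same]
    exact one_ne_zero
  · intro J x hMJ hx hxJ
    have hx' : ((x : KK)).coeff 0 ≠ 0 := fun h => hx (mem_MM.mpr h)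
    have hxne : (x : KK) ≠ 0 := fun hc => hx' (by rw [hc, HahnSeries.coeff_zero])
    have horder : (x : KK).order = 0 :=
      le_antisymm (order_le_of_coeff_ne_zero hx') ((x.2 : goodFun (x : KK)).order_nonneg hxne)
    have hu := isUnit_of_order_eq_zero hxne horder
    rcases isUnit_iff_exists_inv.mp hu with ⟨y, hy⟩
    exact hy ▸ J.mul_mem_right y hxJ

lemma MM_not_principal : ¬ MM.IsPrincipal := by
  intro hp
  obtain ⟨c, hc⟩ := hp.principal
  have hcMM : c ∈ MM := by rw [hc]; exact Ideal.mem_span_singleton_self c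
  have hcoeff0 : ((c : KK)).coeff 0 = 0 := mem_MM.mp hcMM
  have hX1 : Xel 1 (by norm_num) ∈ MM := by
    rw [mem_MM]
    exact coeff_single_of_ne (by norm_num)
  have hcdvd : c ∣ Xel 1 (by norm_num) := by
    rw [hc] at hX1
    exact Ideal.mem_span_singleton.mp hX1
  have hX1ne : ((Xel 1 (by norm_num) : RR) : KK) ≠ 0 := single_ne_zero one_ne_zero
  have hcne : (c : KK) ≠ 0 := by
    rintro h0
    obtain ⟨e, he⟩ := hcdvd
    have := congrArg (fun x : RR => (x : KK)) he
    simp only [MulMemClass.coe_mul, h0, zero_mul] at this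
    exact hX1ne this
  have hocnonneg : 0 ≤ (c : KK).order := (c.2 : goodFun (c : KK)).order_nonneg hcne
  have hocpos : 0 < (c : KK).order := by
    rcases lt_or_eq_of_le hocnonneg with h | h
    · exact h
    · exfalso
      apply coeff_order_eq_zero.not.mpr hcne
      rw [← h]
      exact hcoeff0
  have hhalf : (0:ℚ) ≤ (c : KK).order / 2 := by linarith
  have htMM : Xel ((c : KK).order / 2) hhalf ∈ MM := by
    rw [mem_MM]
    apply coeff_single_of_ne
    intro h
    linarith
  rw [hc] at htMM
  obtain ⟨d, hd⟩ := Ideal.mem_span_singleton.mp htMM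
  have hKd : (single ((c : KK).order / 2) 1 : KK) = (c : KK) * (d : KK) := by
    have := congrArg (fun x : RR => (x : KK)) hd
    simpa [Xel] using this
  have hdne : (d : KK) ≠ 0 := right_ne_zero_of_mul (hKd ▸ single_ne_zero (one_ne_zero : (1:ℂ) ≠ 0))
  have hord : (c : KK).order + (d : KK).order = (c : KK).order / 2 := by
    have h := order_mul hcne hdne
    rw [← hKd, order_single (one_ne_zero : (1:ℂ) ≠ 0)] at h
    exact h.symm
  have hdnonneg : 0 ≤ (d : KK).order := (d.2 : goodFun (d : KK)).order_nonneg hdne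
  linarith

end PCExample

/-- There exists an integral domain satisfying the PC condition which is
neither pre-Schreier (not every element is primal) nor satisfies the MIP condition
(it has a maximal ideal that is not principal). -/
theorem exists_pc_not_preSchreier_not_mip : ∃ (R : Type) (_ : CommRing R) (_ : IsDomain R),
    (∀ a b : R, Ideal.span {a, b} ≠ (⊤ : Ideal R) →
      ∃ c : R, Ideal.span {a, b} ≤ Ideal.span {c} ∧ Ideal.span ({c} : Set R) ≠ ⊤) ∧
    ¬(∀ c : R, IsPrimal c) ∧
    ¬(∀ I : Ideal R, I.IsMaximal → I.IsPrincipal) := by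
  exact ⟨RR, inferInstance, inferInstance, pc_holds,
    not_all_primal,
    fun h => absurd (h MM MM_isMaximal) MM_not_principal⟩
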